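/- Call ℓ ∈ Δ^{n-1} normal if the intersection of all subsets J ⊆ {1,…,n} of cardinality 3 that are long with respect to ℓ is nonempty (where the empty intersection is {1,…,n}). Let 𝒩_n ⊆ Δ^{n-1} denote the set of normal length vectors. Then for n > 4, vol(Δ^{n-1} − 𝒩_n)/vol(Δ^{n-1}) < 24·n^6/2^n. -/

import Mathlib

open MeasureTheory Finset Filter

/-- The open standard simplex Δ^m ⊂ ℝ^{m+1}. -/
def Simplex (m : ℕ) : Set (Fin (m+1) → ℝ) :=
  {ℓ | (∀ i, 0 < ℓ i) ∧ ∑ i, ℓ i = 1}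

/-- Parametrization of the hyperplane ∑ ℓ i = 1 by ℝ^m. -/
noncomputable def emb (m : ℕ) (x : Fin m → ℝ) : Fin (m+1) → ℝ :=
  Fin.snoc x (1 - ∑ i, x i)

/-- Normalized Lebesgue measure of a subset of the simplex Δ^m,
computed as a ratio of Lebesgue volumes in the parametrizing chart. -/
noncomputable def simplexMeasure (m : ℕ) (A : Set (Fin (m+1) → ℝ)) : ENNReal :=
  volume (emb m ⁻¹' A) / volume (emb m ⁻¹' (Simplex m))

/-- The set Γ_p of length vectors for which every p-element subset is short. -/
def Gamma (m p : ℕ) : Set (Fin (m+1) → ℝ) :=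
  {ℓ ∈ Simplex m | ∀ J : Finset (Fin (m+1)), J.card = p → ∑ i ∈ J, ℓ i < 1/2}

/-- The set Λ_p where some coordinate is ≥ 1/(2p). -/
def Lambda (m p : ℕ) : Set (Fin (m+1) → ℝ) :=
  {ℓ ∈ Simplex m | ∃ i, 1/(2*(p:ℝ)) ≤ ℓ i}

/-- A length vector ℓ ∈ Δ^{n-1} is normal if the intersection of all 3-element
subsets that are long w.r.t. ℓ is nonempty (the empty intersection being all of
{1,…,n}).  Here n = m+1 and "J long" means ∑_{i∈J} ℓ_i > 1/2. -/
def NormalVectors (m : ℕ) : Set (Fin (m+1) → ℝ) :=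
  {ℓ ∈ Simplex m | ∃ i : Fin (m+1), ∀ J : Finset (Fin (m+1)),
      J.card = 3 → (1:ℝ)/2 < ∑ j ∈ J, ℓ j → i ∈ J}

lemma simplexSet_measurable {ι : Type*} [Fintype ι] (c : ℝ) :
    MeasurableSet {y : ι → ℝ | (∀ i, 0 < y i) ∧ ∑ i, y i < c} := by
  have h1 : MeasurableSet {y : ι → ℝ | ∀ i, 0 < y i} := by
    have : {y : ι → ℝ | ∀ i, 0 < y i} = Set.pi Set.univ (fun _ => Set.Ioi 0) := by
      ext y; simp [Set.mem_pi]
    rw [this]; exact MeasurableSet.univ_pi fun i => measurableSet_Ioi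
  have h2 : Measurable fun y : ι → ℝ => ∑ i, y i :=
    Finset.univ.measurable_sum (fun i _ => measurable_pi_apply i)
  exact h1.inter (measurableSet_lt h2 measurable_const)

lemma simplexVolFin : ∀ (d : ℕ) (c : ℝ), 0 < c →
    volume {y : Fin d → ℝ | (∀ i, 0 < y i) ∧ ∑ i, y i < c}
      = ENNReal.ofReal (c ^ d / d.factorial) := by
  intro d
  induction d with
  | zero =>
    intro c hc
    have : {y : Fin 0 → ℝ | (∀ i, 0 < y i) ∧ ∑ i, y i < c} = Set.univ := by
      ext y; simp [hc]
    rw [this]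
    rw [MeasureTheory.volume_pi, Measure.pi_univ]; simp
  | succ d ih =>
    intro c hc
    classical
    set e := MeasurableEquiv.piFinSuccAbove (fun _ : Fin (d+1) => ℝ) 0 with he
    set S' : Set (ℝ × (Fin d → ℝ)) :=
      {p | 0 < p.1 ∧ (∀ i, 0 < p.2 i) ∧ ∑ i, p.2 i < c - p.1} with hS'
    have hpre : {y : Fin (d+1) → ℝ | (∀ i, 0 < y i) ∧ ∑ i, y i < c} = e ⁻¹' S' := by
      ext y
      have hsum : ∑ i, y i = y 0 + ∑ i : Fin d, y i.succ := Fin.sum_univ_succ y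
      have happ : e y = (y 0, fun j : Fin d => y (Fin.succAbove 0 j)) := rfl
      simp only [Set.mem_preimage, happ, hS', Set.mem_setOf_eq, Fin.forall_fin_succ, hsum,
        Fin.succAbove_zero]
      constructor
      · rintro ⟨⟨h0, hs⟩, hlt⟩
        exact ⟨h0, hs, by linarith⟩
      · rintro ⟨h0, hs, hlt⟩
        exact ⟨⟨h0, hs⟩, by linarith⟩
    have hS'meas : MeasurableSet S' := by
      have h1 : MeasurableSet {p : ℝ × (Fin d → ℝ) | 0 < p.1} :=
        measurableSet_lt measurable_const measurable_fst
      have h2 : MeasurableSet {p : ℝ × (Fin d → ℝ) | ∀ i, 0 < p.2 i} := by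
        have : {p : ℝ × (Fin d → ℝ) | ∀ i, 0 < p.2 i}
            = ⋂ i, {p : ℝ × (Fin d → ℝ) | 0 < p.2 i} := by ext p; simp
        rw [this]
        exact MeasurableSet.iInter fun i =>
          measurableSet_lt measurable_const (measurable_snd.eval)
      have h3 : MeasurableSet {p : ℝ × (Fin d → ℝ) | ∑ i, p.2 i < c - p.1} := by
        apply measurableSet_lt
        · exact Finset.univ.measurable_sum fun i _ => measurable_snd.eval
        · exact measurable_const.sub measurable_fst
      exact (h1.inter (h2.inter h3)).congr (by ext p; simp [hS', Set.mem_setOf_eq, and_assoc])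
    have hmp := MeasureTheory.measurePreserving_piFinSuccAbove
      (fun _ : Fin (d+1) => (volume : Measure ℝ)) 0
    have hvol : volume {y : Fin (d+1) → ℝ | (∀ i, 0 < y i) ∧ ∑ i, y i < c}
        = (volume : Measure ℝ).prod (volume : Measure (Fin d → ℝ)) S' := by
      rw [hpre, MeasureTheory.volume_pi]
      have := hmp.measure_preimage hS'meas.nullMeasurableSet
      simpa [MeasureTheory.volume_pi, he] using this
    rw [hvol]
    rw [MeasureTheory.Measure.prod_apply hS'meas]
    have hslice : ∀ t : ℝ, volume (Prod.mk t ⁻¹' S')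
        = Set.indicator (Set.Ioo 0 c) (fun t => ENNReal.ofReal ((c-t)^d / d.factorial)) t := by
      intro t
      by_cases ht : t ∈ Set.Ioo 0 c
      · have : Prod.mk t ⁻¹' S' = {z : Fin d → ℝ | (∀ i, 0 < z i) ∧ ∑ i, z i < c - t} := by
          ext z; simp [hS', ht.1]
        rw [this, ih (c - t) (by linarith [ht.2]), Set.indicator_of_mem ht]
      · have : Prod.mk t ⁻¹' S' = ∅ := by
          ext z
          simp only [Set.mem_preimage, hS', Set.mem_setOf_eq, Set.mem_empty_iff_false, iff_false]
          rintro ⟨h0, hz, hlt⟩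
          have hnn : (0:ℝ) ≤ ∑ i, z i := Finset.sum_nonneg fun i _ => (hz i).le
          simp only [Set.mem_Ioo, not_and, not_lt] at ht
          have := ht h0
          linarith
        rw [this, Set.indicator_of_notMem ht]
        simp
    calc ∫⁻ t, volume (Prod.mk t ⁻¹' S')
        = ∫⁻ t, Set.indicator (Set.Ioo 0 c)
            (fun t => ENNReal.ofReal ((c-t)^d / d.factorial)) t := by
          exact lintegral_congr hslice
      _ = ∫⁻ t in Set.Ioo 0 c, ENNReal.ofReal ((c-t)^d / d.factorial) := by
          rw [lintegral_indicator measurableSet_Ioo]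
      _ = ENNReal.ofReal (c ^ (d+1) / (d+1).factorial) := by
          have hInt : MeasureTheory.IntegrableOn
              (fun t => (c-t)^d / d.factorial) (Set.Ioo 0 c) := by
            apply MeasureTheory.IntegrableOn.mono_set _ Set.Ioo_subset_Icc_self
            apply Continuous.integrableOn_Icc
            continuity
          rw [← MeasureTheory.ofReal_integral_eq_lintegral_ofReal hInt
            (MeasureTheory.ae_restrict_of_forall_mem measurableSet_Ioo fun t ht =>
              div_nonneg (pow_nonneg (by linarith [ht.2]) d) (by positivity))]
          congr 1
          have h1 : ∫ t in Set.Ioo 0 c, (c-t)^d / d.factorial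
              = (∫ t in (0:ℝ)..c, (c-t)^d) / d.factorial := by
            rw [← MeasureTheory.integral_Ioc_eq_integral_Ioo,
              ← intervalIntegral.integral_of_le hc.le, intervalIntegral.integral_div]
          have h2 : ∫ t in (0:ℝ)..c, (c-t)^d = c^(d+1)/(d+1) := by
            rw [intervalIntegral.integral_comp_sub_left (fun x => x^d) c]
            simp only [sub_self, sub_zero, integral_pow, zero_pow (Nat.succ_ne_zero d)]
          rw [h1, h2, Nat.factorial_succ]
          have hd : (0:ℝ) < d.factorial := by positivity
          push_cast
          field_simp

lemma simplexVol (ι : Type*) [Fintype ι] (c : ℝ) (hc : 0 < c) :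
    volume {y : ι → ℝ | (∀ i, 0 < y i) ∧ ∑ i, y i < c}
      = ENNReal.ofReal (c ^ (Fintype.card ι) / (Fintype.card ι).factorial) := by
  obtain ⟨e⟩ : Nonempty (Fin (Fintype.card ι) ≃ ι) := ⟨(Fintype.equivFin ι).symm⟩
  have hmp := MeasureTheory.volume_measurePreserving_piCongrLeft (fun _ : ι => ℝ) e
  have hpre : (MeasurableEquiv.piCongrLeft (fun _ : ι => ℝ) e) ⁻¹'
        {y : ι → ℝ | (∀ i, 0 < y i) ∧ ∑ i, y i < c}
      = {y : Fin (Fintype.card ι) → ℝ | (∀ i, 0 < y i) ∧ ∑ i, y i < c} := by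
    ext x
    have happ : ∀ i, (MeasurableEquiv.piCongrLeft (fun _ : ι => ℝ) e) x i = x (e.symm i) := by
      intro i
      simp [MeasurableEquiv.piCongrLeft, Equiv.piCongrLeft_apply_eq_cast]
    simp only [Set.mem_preimage, Set.mem_setOf_eq, happ]
    constructor
    · rintro ⟨h1, h2⟩
      refine ⟨fun j => by simpa using h1 (e j), ?_⟩
      rwa [Fintype.sum_equiv e.symm (fun i : ι => x (e.symm i)) (fun j => x j)
        (fun i => rfl)] at h2
    · rintro ⟨h1, h2⟩
      refine ⟨fun i => h1 (e.symm i), ?_⟩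
      rwa [Fintype.sum_equiv e.symm (fun i : ι => x (e.symm i)) (fun j => x j)
        (fun i => rfl)]
  rw [← hmp.measure_preimage (simplexSet_measurable c).nullMeasurableSet, hpre,
    simplexVolFin _ c hc]

lemma simplexVolHalf (ι : Type*) [Fintype ι] :
    volume {y : ι → ℝ | (∀ i, 0 < y i) ∧ ∑ i, y i < 1/2}
      = ENNReal.ofReal ((1/2:ℝ) ^ (Fintype.card ι) / (Fintype.card ι).factorial) :=
  simplexVol ι (1/2) (by norm_num)

lemma splitBound (m : ℕ) (K : Finset (Fin m)) :
    volume {x : Fin m → ℝ | (∀ i, 0 < x i) ∧ (∀ i ∈ K, x i < 1) ∧ ∑ i ∈ Kᶜ, x i < 1/2}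
      = ENNReal.ofReal ((1/2:ℝ) ^ (m - K.card) / (m - K.card).factorial) := by
  classical
  set p : Fin m → Prop := fun i => i ∈ K with hp
  set e := MeasurableEquiv.piEquivPiSubtypeProd (fun _ : Fin m => ℝ) p with he
  set A : Set ({i // p i} → ℝ) := Set.pi Set.univ (fun _ => Set.Ioo (0:ℝ) 1) with hA
  set B : Set ({i // ¬ p i} → ℝ) := {b | (∀ i, 0 < b i) ∧ ∑ i, b i < 1/2} with hB
  have hmp := MeasureTheory.volume_preserving_piEquivPiSubtypeProd
    (fun _ : Fin m => ℝ) p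
  have hpre : {x : Fin m → ℝ | (∀ i, 0 < x i) ∧ (∀ i ∈ K, x i < 1) ∧ ∑ i ∈ Kᶜ, x i < 1/2}
      = e ⁻¹' (A ×ˢ B) := by
    ext x
    have happ : e x = (fun i : {i // p i} => x i, fun i : {i // ¬ p i} => x i) := rfl
    have hsum : ∑ i ∈ Kᶜ, x i = ∑ i : {i // ¬ p i}, x i := by
      rw [← Finset.sum_subtype Kᶜ (fun i => Finset.mem_compl) (fun i => x i)]
    simp only [Set.mem_setOf_eq, Set.mem_preimage, happ, Set.mem_prod, hA, hB, Set.mem_pi,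
      Set.mem_univ, forall_true_left, Set.mem_Ioo, Set.mem_setOf_eq, hsum]
    constructor
    · rintro ⟨h1, h2, h3⟩
      exact ⟨fun i => ⟨h1 i, h2 i i.2⟩, fun i => h1 i, h3⟩
    · rintro ⟨h1, h2, h3⟩
      refine ⟨fun i => ?_, fun i hi => (h1 ⟨i, hi⟩).2, h3⟩
      by_cases hi : p i
      · exact (h1 ⟨i, hi⟩).1
      · exact h2 ⟨i, hi⟩
  have hAmeas : MeasurableSet A := MeasurableSet.univ_pi fun _ => measurableSet_Ioo
  have hBmeas : MeasurableSet B := simplexSet_measurable (1/2)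
  rw [hpre, hmp.measure_preimage (hAmeas.prod hBmeas).nullMeasurableSet]
  rw [MeasureTheory.Measure.volume_eq_prod, MeasureTheory.Measure.prod_prod]
  rw [hA, hB]
  simp only [MeasureTheory.volume_pi_pi, simplexVolHalf, Real.volume_Ioo, sub_zero,
    ENNReal.ofReal_one, Finset.prod_const_one, one_mul]
  congr 2 <;>
  · rw [Fintype.card_subtype_compl]
    congr 1 <;> simp [hp, Fintype.card_subtype, Finset.filter_mem_eq_inter]

lemma emb_preimage_simplex (m : ℕ) :
    emb m ⁻¹' (Simplex m) = {x : Fin m → ℝ | (∀ i, 0 < x i) ∧ ∑ i, x i < 1} := by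
  ext x
  have hsum : ∑ i, emb m x i = 1 := by
    rw [Fin.sum_univ_castSucc]
    simp [emb, Fin.snoc_castSucc, Fin.snoc_last]
  simp only [Set.mem_preimage, Simplex, Set.mem_setOf_eq, hsum, and_true]
  constructor
  · intro h
    refine ⟨fun i => by simpa [emb, Fin.snoc_castSucc] using h i.castSucc, ?_⟩
    have := h (Fin.last m)
    simp only [emb, Fin.snoc_last] at this
    linarith
  · rintro ⟨h1, h2⟩
    intro i
    rcases eq_or_ne i (Fin.last m) with rfl | hne
    · simp only [emb, Fin.snoc_last]; linarith
    · obtain ⟨j, rfl⟩ := Fin.exists_castSucc_eq.mpr hne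
      simpa [emb, Fin.snoc_castSucc] using h1 j

lemma badJ_subset (m : ℕ) (J : Finset (Fin (m+1))) :
    emb m ⁻¹' {ℓ | ℓ ∈ Simplex m ∧ 1/2 < ∑ j ∈ J, ℓ j} ⊆
      {x : Fin m → ℝ | (∀ i, 0 < x i) ∧
        (∀ i ∈ Finset.univ.filter (fun i : Fin m => i.castSucc ∈ J), x i < 1) ∧
        ∑ i ∈ (Finset.univ.filter (fun i : Fin m => i.castSucc ∈ J))ᶜ, x i < 1/2} := by
  classical
  intro x hx
  obtain ⟨hS, hlong⟩ := hx
  have hx' : x ∈ emb m ⁻¹' (Simplex m) := hS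
  rw [emb_preimage_simplex] at hx'
  obtain ⟨hpos, hs⟩ := hx'
  set K := Finset.univ.filter (fun i : Fin m => i.castSucc ∈ J) with hK
  set s := ∑ i, x i with hsdef
  have hxle : ∀ i : Fin m, x i ≤ s :=
    fun i => Finset.single_le_sum (fun j _ => (hpos j).le) (Finset.mem_univ i)
  refine ⟨hpos, fun i _ => lt_of_le_of_lt (hxle i) hs, ?_⟩
  -- key: ∑_{j ∈ J} ℓ j ≤ ∑_{i ∈ K} x i + (1 - s)
  have himg : K.image Fin.castSucc = J.erase (Fin.last m) := by
    ext j
    simp only [Finset.mem_image, hK, Finset.mem_filter, Finset.mem_univ, true_and,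
      Finset.mem_erase]
    constructor
    · rintro ⟨i, hi, rfl⟩
      exact ⟨(Fin.castSucc_lt_last i).ne, hi⟩
    · rintro ⟨hne, hj⟩
      obtain ⟨i, rfl⟩ := Fin.exists_castSucc_eq.mpr hne
      exact ⟨i, hj, rfl⟩
  have hKsum : ∑ i ∈ K, x i = ∑ j ∈ J.erase (Fin.last m), emb m x j := by
    rw [← himg, Finset.sum_image (fun a _ b _ h => Fin.castSucc_injective m h)]
    exact Finset.sum_congr rfl fun i _ => by simp [emb, Fin.snoc_castSucc]
  have hnonneg : ∀ j : Fin (m+1), 0 ≤ emb m x j := by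
    intro j
    rcases eq_or_ne j (Fin.last m) with rfl | hne
    · simp only [emb, Fin.snoc_last]; linarith
    · obtain ⟨i, rfl⟩ := Fin.exists_castSucc_eq.mpr hne
      simp only [emb, Fin.snoc_castSucc]
      exact (hpos i).le
  have hkey : ∑ j ∈ J, emb m x j ≤ ∑ i ∈ K, x i + (1 - s) := by
    have h1 : ∑ j ∈ J, emb m x j ≤ ∑ j ∈ insert (Fin.last m) J, emb m x j :=
      Finset.sum_le_sum_of_subset_of_nonneg (Finset.subset_insert _ _)
        (fun j _ _ => hnonneg j)
    have h2 : ∑ j ∈ insert (Fin.last m) J, emb m x j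
        = ∑ j ∈ (insert (Fin.last m) J).erase (Fin.last m), emb m x j + emb m x (Fin.last m) :=
      (Finset.sum_erase_add _ _ (Finset.mem_insert_self _ _)).symm
    rw [Finset.erase_insert_eq_erase] at h2
    have h3 : emb m x (Fin.last m) = 1 - s := by simp [emb, Fin.snoc_last, hsdef]
    rw [h2, h3, ← hKsum] at h1
    exact h1
  have hcompl : ∑ i ∈ Kᶜ, x i = s - ∑ i ∈ K, x i := by
    have := Finset.sum_add_sum_compl K x
    linarith
  rw [hcompl]
  linarith

lemma cardK_le (m : ℕ) (J : Finset (Fin (m+1))) :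
    (Finset.univ.filter (fun i : Fin m => i.castSucc ∈ J)).card ≤ J.card := by
  classical
  have : (Finset.univ.filter (fun i : Fin m => i.castSucc ∈ J)).card
      = ((Finset.univ.filter (fun i : Fin m => i.castSucc ∈ J)).image Fin.castSucc).card :=
    (Finset.card_image_of_injective _ (Fin.castSucc_injective m)).symm
  rw [this]
  apply Finset.card_le_card
  intro j hj
  simp only [Finset.mem_image, Finset.mem_filter] at hj
  obtain ⟨i, ⟨_, hi⟩, rfl⟩ := hj
  exact hi

lemma halfpow_anti {a b : ℕ} (h : a ≤ b) :
    (1/2:ℝ) ^ b / b.factorial ≤ (1/2:ℝ) ^ a / a.factorial := by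
  apply div_le_div₀ (by positivity)
  · exact pow_le_pow_of_le_one (by norm_num) (by norm_num) h
  · positivity
  · exact_mod_cast Nat.factorial_le h


lemma key_ineq (m : ℕ) (hm4 : 4 ≤ m) :
    (Nat.choose (m+1) 3 : ℝ) * ((1/2:ℝ) ^ (m-3) / (m-3).factorial)
      < 24 * ((m:ℝ)+1)^6 / 2^(m+1) * (1 / m.factorial) := by
  obtain ⟨a, rfl⟩ : ∃ a, m = a + 4 := ⟨m - 4, by omega⟩
  have hms : a + 4 - 3 = a + 1 := by omega
  rw [hms]
  have hfac : ((a+4).factorial : ℝ)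
      = ((a:ℝ)+4)*((a:ℝ)+3)*((a:ℝ)+2)*((a+1).factorial:ℝ) := by
    rw [show a+4 = (a+3)+1 from rfl, Nat.factorial_succ,
      show a+3 = (a+2)+1 from rfl, Nat.factorial_succ,
      show a+2 = (a+1)+1 from rfl, Nat.factorial_succ]
    push_cast; ring
  have hch : (Nat.choose (a+5) 3 : ℝ) ≤ ((a:ℝ)+5)^3/6 := by
    have h := Nat.choose_le_pow_div (α := ℝ) 3 (a+5)
    have : ((3:ℕ).factorial : ℝ) = 6 := by norm_num [Nat.factorial]
    rw [this] at h
    push_cast at h ⊢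
    convert h using 2
  have hcast : ((a:ℝ)+4+1) = (a:ℝ)+5 := by ring
  have h2 : (2:ℝ)^(a+5) = 2^(a+1)*16 := by
    rw [show a+5 = (a+1)+4 from rfl, pow_add]; norm_num
  have hhalf : (1/2:ℝ)^(a+1) = 1/2^(a+1) := by rw [div_pow]; norm_num
  have hf1 : (0:ℝ) < (a+1).factorial := by positivity
  have hp2 : (0:ℝ) < 2^(a+1) := by positivity
  have hA : (0:ℝ) < (a:ℝ)+5 := by positivity
  show (Nat.choose (a+4+1) 3 : ℝ) * ((1/2:ℝ) ^ (a+1) / (a+1).factorial)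
      < 24 * (((a+4:ℕ):ℝ)+1)^6 / 2^(a+4+1) * (1 / (a+4).factorial)
  push_cast
  rw [hfac] at *
  rw [hhalf]
  rw [show a+4+1 = a+5 from rfl] at *
  rw [h2]
  rw [hcast]
  have hP : ((a:ℝ)+4)*((a:ℝ)+3)*((a:ℝ)+2) ≤ ((a:ℝ)+5)^3 := by
    nlinarith [Nat.cast_nonneg (α := ℝ) a]
  have key : (Nat.choose (a+5) 3 : ℝ) * (16 * (((a:ℝ)+4)*((a:ℝ)+3)*((a:ℝ)+2)))
      < 24*((a:ℝ)+5)^6 := by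
    calc (Nat.choose (a+5) 3 : ℝ) * (16 * (((a:ℝ)+4)*((a:ℝ)+3)*((a:ℝ)+2)))
        ≤ (((a:ℝ)+5)^3/6) * (16 * (((a:ℝ)+4)*((a:ℝ)+3)*((a:ℝ)+2))) := by
          apply mul_le_mul_of_nonneg_right hch
          have h0 : (0:ℝ) ≤ (a:ℝ) := Nat.cast_nonneg a
          positivity
      _ ≤ (((a:ℝ)+5)^3/6) * (16 * ((a:ℝ)+5)^3) := by
          apply mul_le_mul_of_nonneg_left _ (by positivity)
          nlinarith
      _ = (8/3)*((a:ℝ)+5)^6 := by ring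
      _ < 24*((a:ℝ)+5)^6 := by nlinarith [pow_pos hA 6]
  have hXF : (0:ℝ) < 2^(a+1) * (a+1).factorial := by positivity
  have lhs_eq : (Nat.choose (a+5) 3 : ℝ) * (1/2^(a+1) / (a+1).factorial)
      = (Nat.choose (a+5) 3 : ℝ) / (2^(a+1) * (a+1).factorial) := by
    field_simp
  have hPpos : (0:ℝ) < ((a:ℝ)+4)*((a:ℝ)+3)*((a:ℝ)+2) := by
    have h0 : (0:ℝ) ≤ (a:ℝ) := Nat.cast_nonneg a
    positivity
  rw [lhs_eq, div_lt_iff₀ hXF]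
  have rhs_eq : 24 * ((a:ℝ)+5)^6 / (2^(a+1)*16)
        * (1 / (((a:ℝ)+4)*((a:ℝ)+3)*((a:ℝ)+2) * (a+1).factorial))
      = 24 * ((a:ℝ)+5)^6 / (16 * (((a:ℝ)+4)*((a:ℝ)+3)*((a:ℝ)+2)))
        / (2^(a+1) * (a+1).factorial) := by
    field_simp
  rw [rhs_eq, div_mul_cancel₀ _ hXF.ne']
  rw [lt_div_iff₀ (by positivity)]
  exact key

/-- for n = m+1 > 4, the relative volume of the set of non-normal
length vectors is less than 24·n^6/2^n. -/
theorem stmt18 (m : ℕ) (hm : 4 < m + 1) :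
    simplexMeasure m (Simplex m \ NormalVectors m)
      < ENNReal.ofReal (24 * ((m:ℝ)+1)^6 / 2^(m+1)) := by
  classical
  have hm4 : 4 ≤ m := by omega
  -- volume of chart simplex
  have hTvol : volume (emb m ⁻¹' (Simplex m)) = ENNReal.ofReal (1 / m.factorial) := by
    rw [emb_preimage_simplex, simplexVolFin m 1 one_pos, one_pow]
  -- bad set covered by long-J sets
  have hsub : emb m ⁻¹' (Simplex m \ NormalVectors m) ⊆
      ⋃ J ∈ Finset.powersetCard 3 (Finset.univ : Finset (Fin (m+1))),
        emb m ⁻¹' {ℓ | ℓ ∈ Simplex m ∧ 1/2 < ∑ j ∈ J, ℓ j} := by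
    intro x hx
    obtain ⟨hS, hN⟩ := hx
    have : ¬ ∃ i : Fin (m+1), ∀ J : Finset (Fin (m+1)),
        J.card = 3 → (1:ℝ)/2 < ∑ j ∈ J, emb m x j → i ∈ J := by
      intro h; exact hN ⟨hS, h⟩
    push_neg at this
    obtain ⟨J, hJcard, hJlong, _⟩ := this 0
    refine Set.mem_biUnion ?_ ⟨hS, hJlong⟩
    exact Finset.mem_powersetCard_univ.mpr hJcard
  -- per-J volume bound
  have hJvol : ∀ J ∈ Finset.powersetCard 3 (Finset.univ : Finset (Fin (m+1))),
      volume (emb m ⁻¹' {ℓ | ℓ ∈ Simplex m ∧ 1/2 < ∑ j ∈ J, ℓ j})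
        ≤ ENNReal.ofReal ((1/2:ℝ) ^ (m-3) / (m-3).factorial) := by
    intro J hJ
    have hJcard : J.card = 3 := Finset.mem_powersetCard_univ.mp hJ
    calc volume (emb m ⁻¹' {ℓ | ℓ ∈ Simplex m ∧ 1/2 < ∑ j ∈ J, ℓ j})
        ≤ volume {x : Fin m → ℝ | (∀ i, 0 < x i) ∧
            (∀ i ∈ Finset.univ.filter (fun i : Fin m => i.castSucc ∈ J), x i < 1) ∧
            ∑ i ∈ (Finset.univ.filter (fun i : Fin m => i.castSucc ∈ J))ᶜ, x i < 1/2} :=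
          measure_mono (badJ_subset m J)
      _ = ENNReal.ofReal ((1/2:ℝ) ^ (m - (Finset.univ.filter
            (fun i : Fin m => i.castSucc ∈ J)).card) / (m - (Finset.univ.filter
            (fun i : Fin m => i.castSucc ∈ J)).card).factorial) := splitBound m _
      _ ≤ ENNReal.ofReal ((1/2:ℝ) ^ (m-3) / (m-3).factorial) := by
          apply ENNReal.ofReal_le_ofReal
          apply halfpow_anti
          have := cardK_le m J
          omega
  -- total volume bound
  have hvolbad : volume (emb m ⁻¹' (Simplex m \ NormalVectors m))
      ≤ (Nat.choose (m+1) 3 : ENNReal) * ENNReal.ofReal ((1/2:ℝ) ^ (m-3) / (m-3).factorial) := by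
    calc volume (emb m ⁻¹' (Simplex m \ NormalVectors m))
        ≤ volume (⋃ J ∈ Finset.powersetCard 3 (Finset.univ : Finset (Fin (m+1))),
            emb m ⁻¹' {ℓ | ℓ ∈ Simplex m ∧ 1/2 < ∑ j ∈ J, ℓ j}) := measure_mono hsub
      _ ≤ ∑ J ∈ Finset.powersetCard 3 (Finset.univ : Finset (Fin (m+1))),
            volume (emb m ⁻¹' {ℓ | ℓ ∈ Simplex m ∧ 1/2 < ∑ j ∈ J, ℓ j}) :=
          measure_biUnion_finset_le _ _
      _ ≤ ∑ J ∈ Finset.powersetCard 3 (Finset.univ : Finset (Fin (m+1))),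
            ENNReal.ofReal ((1/2:ℝ) ^ (m-3) / (m-3).factorial) := Finset.sum_le_sum hJvol
      _ = (Nat.choose (m+1) 3 : ENNReal)
            * ENNReal.ofReal ((1/2:ℝ) ^ (m-3) / (m-3).factorial) := by
          rw [Finset.sum_const, Finset.card_powersetCard, Finset.card_univ, Fintype.card_fin,
            nsmul_eq_mul]
  -- assemble
  rw [simplexMeasure, hTvol]
  have hv0 : ENNReal.ofReal (1 / m.factorial) ≠ 0 := by
    rw [Ne, ENNReal.ofReal_eq_zero, not_le]
    positivity
  have hvt : ENNReal.ofReal (1 / m.factorial) ≠ ⊤ := ENNReal.ofReal_ne_top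
  rw [ENNReal.div_lt_iff (Or.inl hv0) (Or.inl hvt)]
  calc volume (emb m ⁻¹' (Simplex m \ NormalVectors m))
      ≤ (Nat.choose (m+1) 3 : ENNReal)
          * ENNReal.ofReal ((1/2:ℝ) ^ (m-3) / (m-3).factorial) := hvolbad
    _ = ENNReal.ofReal ((Nat.choose (m+1) 3 : ℝ)
          * ((1/2:ℝ) ^ (m-3) / (m-3).factorial)) := by
        rw [ENNReal.ofReal_mul (by positivity), ENNReal.ofReal_natCast]
    _ < ENNReal.ofReal (24 * ((m:ℝ)+1)^6 / 2^(m+1) * (1 / m.factorial)) := by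
        rw [ENNReal.ofReal_lt_ofReal_iff (by positivity)]
        exact key_ineq m hm4
    _ = ENNReal.ofReal (24 * ((m:ℝ)+1)^6 / 2^(m+1)) * ENNReal.ofReal (1 / m.factorial) := by
        rw [ENNReal.ofReal_mul (by positivity)]
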